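/- Let I ⊆ ℝ be an open interval, a, b, f₄ : ℝ → ℝ, let E be differentiable on I with E'(x) = f₄(x)/2 + b(x) for all x ∈ I, and let J be differentiable on I with J(x) ≠ 0 and J'(x) = 2a(x)·exp(−E(x)) for all x ∈ I. Define c(x) = f₄(x)·exp(−E(x)) / J(x). Then y_p(x) = (1/2)·J(x)·exp(E(x)) solves the Riccati equation y_p'(x) = a(x) + b(x)y_p(x) + c(x)y_p(x)² for all x ∈ I. -/

import Mathlib

/-- Particular solution underlying Theorem 9 (Case 9): with
`E' = f₄/2 + b`, `J ≠ 0`, `J' = 2a · exp(−E)` and `c = f₄ · exp(−E)/J`, the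
function `y_p = (1/2)·J·exp E` solves the Riccati equation. -/
theorem riccati_case9_particular
    (p q : ℝ) (a b c f₄ E J : ℝ → ℝ)
    (hE : ∀ x ∈ Set.Ioo p q, HasDerivAt E (f₄ x / 2 + b x) x)
    (hJne : ∀ x ∈ Set.Ioo p q, J x ≠ 0)
    (hJ : ∀ x ∈ Set.Ioo p q, HasDerivAt J (2 * a x * Real.exp (-E x)) x)
    (hcdef : ∀ x ∈ Set.Ioo p q, c x = f₄ x * Real.exp (-E x) / J x) :
    ∀ x ∈ Set.Ioo p q,
      HasDerivAt (fun t => (1 / 2) * J t * Real.exp (E t))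
        (a x + b x * ((1 / 2) * J x * Real.exp (E x))
          + c x * ((1 / 2) * J x * Real.exp (E x)) ^ 2) x := by
  intro x hx
  have hexp : HasDerivAt (fun t => Real.exp (E t))
      (Real.exp (E x) * (f₄ x / 2 + b x)) x := (hE x hx).exp
  have h := (((hJ x hx).const_mul ((1:ℝ) / 2)).mul hexp)
  have h2 : HasDerivAt (fun t => (1 / 2) * J t * Real.exp (E t))
      (1 / 2 * (2 * a x * Real.exp (-E x)) * Real.exp (E x)
        + 1 / 2 * J x * (Real.exp (E x) * (f₄ x / 2 + b x))) x := by
    simpa [mul_assoc, Pi.mul_def] using h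
  convert h2 using 1
  rw [hcdef x hx, Real.exp_neg]
  have hJx := hJne x hx
  have he : Real.exp (E x) ≠ 0 := Real.exp_ne_zero _
  field_simp
  ring
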